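/- Let C be a category equipped with a functor s : I → C, let A be an abelian category, and let T : C → A be a functor. Define h̄t_I(T) ∈ {−1,0,1,…,∞} by: h̄t_I(T) ≤ h iff for all m ≥ n > h the subobjects im(Ts(r_{S+m−n})) of Ts(m), as S ranges over the proper subsets of n̲ and S+m−n = {s+m−n : s ∈ S} ⊆ m̲ is regarded as an endomorphism of m in I, sum to all of Ts(m). Then h̄t_I(T) > 0 implies h̄t_I(T) = ∞; equivalently, if h̄t_I(T) < ∞ then h̄t_I(T) ≤ 0. -/

import Mathlib

open CategoryTheory CategoryTheory.Limits

/-- The category `𝓘`: objects are the non-negative integers, and a morphism `m ⟶ n`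
is a subset of `{0, …, min m n − 1}` (the 0-based incarnation of `{1, …, min(m,n)}`),
thought of as the partial identity defined on that subset.  Composition is given by
intersection, and the identity of `n` is the full subset. -/
abbrev Icat : Type := ℕ

instance : Category Icat where
  Hom m n := {S : Finset ℕ // S ⊆ Finset.range (min m n)}
  id n := ⟨Finset.range n, by simp⟩
  comp {m n k} f g := ⟨f.1 ∩ g.1, by
    intro i hi
    rw [Finset.mem_inter] at hi
    have h1 := f.2 hi.1
    have h2 := g.2 hi.2
    rw [Finset.mem_range] at h1 h2 ⊢
    omega⟩
  id_comp {m n} f := by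
    apply Subtype.ext
    dsimp
    rw [Finset.inter_eq_right]
    intro i hi
    have := f.2 hi
    rw [Finset.mem_range] at this ⊢
    omega
  comp_id {m n} f := by
    apply Subtype.ext
    dsimp
    rw [Finset.inter_eq_left]
    intro i hi
    have := f.2 hi
    rw [Finset.mem_range] at this ⊢
    omega
  assoc f g h := by
    apply Subtype.ext
    exact Finset.inter_assoc _ _ _

/-- The endomorphism of `m` in `𝓘` given by the partial identity defined on the
subset `R` (intersected with the ambient set `{0, …, m−1}`). -/
def pId (m : ℕ) (R : Finset ℕ) : (m : Icat) ⟶ (m : Icat) :=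
  ⟨R ∩ Finset.range m, by
    intro i hi
    rw [Finset.mem_inter] at hi
    simpa [Nat.min_self] using hi.2⟩

universe v u w z

variable {C : Type u} [Category.{v} C] {A : Type w} [Category.{z} A] [Abelian A]

/-- The condition (for given `m ≥ n`) that the subobjects `im(T s(r_{S + m − n}))` of
`T(s(m))`, as `S` ranges over the proper subsets of `n̲` and `S + m − n` denotes the
shifted subset `{s + m − n : s ∈ S} ⊆ m̲` regarded as a partial-identity endomorphism of
`m` in `𝓘`, sum (i.e. have supremum) equal to all of `T(s(m))`. -/
def ImSumTop (s : Icat ⥤ C) (T : C ⥤ A) (m n : ℕ) : Prop :=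
  ((Finset.range n).powerset.erase (Finset.range n)).sup
      (fun S => imageSubobject (T.map (s.map (pId m (S.image (· + (m - n)))))))
    = ⊤

/-- If a finite supremum of image subobjects of endomorphisms of `X` is `⊤` and every
one of those endomorphisms composes with `φ` to zero, then `φ = 0`. -/
lemma zero_of_sup_image_top {X Y : A} {ι : Type*} [DecidableEq ι] (K : Finset ι)
    (g : ι → (X ⟶ X)) (hsup : K.sup (fun k => imageSubobject (g k)) = ⊤) (φ : X ⟶ Y)
    (hz : ∀ k ∈ K, g k ≫ φ = 0) : φ = 0 := by
  have hker : kernelSubobject φ = ⊤ := by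
    rw [eq_top_iff, ← hsup]
    refine Finset.sup_le fun k hk => ?_
    exact imageSubobject_le (g k) (factorThruKernelSubobject φ (g k) (hz k hk))
      (factorThruKernelSubobject_comp_arrow _ _ _)
  haveI : IsIso (kernelSubobject φ).arrow :=
    (Subobject.isIso_arrow_iff_eq_top _).mpr hker
  rw [← cancel_epi (kernelSubobject φ).arrow, kernelSubobject_arrow_comp, comp_zero]

/-- A subobject whose cokernel projection vanishes is the whole object. -/
lemma subobject_eq_top_of_cokernel_pi_zero {X : A} (W : Subobject X)
    (hc : cokernel.π W.arrow = 0) : W = ⊤ := by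
  haveI : Epi W.arrow := Preadditive.epi_of_cokernel_zero hc
  haveI : IsIso W.arrow := isIso_of_mono_of_epi _
  exact Subobject.eq_top_of_isIso_arrow W

/-- The morphism in `Icat` between `a` and `b` which is the partial identity defined on
all of `{0, …, min a b − 1}`. -/
def fullHom (a b : Icat) : a ⟶ b := ⟨Finset.range (min a b), Finset.Subset.refl _⟩

set_option maxHeartbeats 1000000 in
/-- Key step: the hypothesis at `(m + h + 1, h + 1)` forces the image of the partial
identity on `∅` to be everything. -/
lemma image_empty_top (s : Icat ⥤ C) (T : C ⥤ A) (h : ℕ)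
    (hfin : ∀ m n : ℕ, n ≤ m → h < n → ImSumTop s T m n) (m : ℕ) :
    imageSubobject (T.map (s.map (pId m ∅))) = ⊤ := by
  apply subobject_eq_top_of_cokernel_pi_zero
  have hQ := hfin (m + h + 1) (h + 1) (by omega) (by omega)
  unfold ImSumTop at hQ
  -- the image of `pId m ∅` absorbs the cokernel projection
  have hempty : T.map (s.map (pId m ∅)) ≫
      cokernel.π (imageSubobject (T.map (s.map (pId m ∅)))).arrow = 0 := by
    have h1 : T.map (s.map (pId m ∅)) ≫
        cokernel.π (imageSubobject (T.map (s.map (pId m ∅)))).arrow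
        = factorThruImageSubobject (T.map (s.map (pId m ∅))) ≫
          ((imageSubobject (T.map (s.map (pId m ∅)))).arrow ≫
            cokernel.π (imageSubobject (T.map (s.map (pId m ∅)))).arrow) := by
      rw [← Category.assoc, imageSubobject_arrow_comp]
    rw [h1, cokernel.condition, comp_zero]
  -- the pushed-forward morphism vanishes on every generator
  have hφ : T.map (s.map (fullHom (m + h + 1) m)) ≫
      cokernel.π (imageSubobject (T.map (s.map (pId m ∅)))).arrow = 0 := by
    refine zero_of_sup_image_top _ _ hQ _ ?_
    intro S hS
    have hcomp : pId (m + h + 1) (S.image (· + ((m + h + 1) - (h + 1)))) ≫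
        fullHom (m + h + 1) m = fullHom (m + h + 1) m ≫ pId m ∅ := by
      apply Subtype.ext
      show (S.image (· + ((m + h + 1) - (h + 1))) ∩ Finset.range (m + h + 1)) ∩
          Finset.range (min (m + h + 1) m)
        = Finset.range (min (m + h + 1) m) ∩ (∅ ∩ Finset.range m)
      ext x
      simp only [Finset.mem_inter, Finset.mem_image, Finset.mem_range,
        Finset.notMem_empty, false_and, and_false, lt_min_iff, iff_false]
      rintro ⟨⟨⟨a, _, rfl⟩, -⟩, -, hxm⟩
      omega
    rw [← Category.assoc, ← T.map_comp, ← s.map_comp, hcomp, s.map_comp, T.map_comp,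
      Category.assoc, hempty, comp_zero]
  -- the full morphism `m + h + 1 ⟶ m` is a split epimorphism, so the projection is zero
  have hip : fullHom m (m + h + 1) ≫ fullHom (m + h + 1) m = 𝟙 (m : Icat) := by
    apply Subtype.ext
    show Finset.range (min m (m + h + 1)) ∩ Finset.range (min (m + h + 1) m)
      = Finset.range m
    ext x
    simp only [Finset.mem_inter, Finset.mem_range, lt_min_iff]
    omega
  have hid : T.map (s.map (fullHom m (m + h + 1))) ≫
      T.map (s.map (fullHom (m + h + 1) m)) = 𝟙 _ := by
    rw [← T.map_comp, ← s.map_comp, hip, s.map_id, T.map_id]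
  rw [← Category.id_comp (cokernel.π (imageSubobject (T.map (s.map (pId m ∅)))).arrow),
    ← hid, Category.assoc, hφ, comp_zero]

set_option maxHeartbeats 1000000 in
/-- Statement 11: let `C` be a category with a functor `s : 𝓘 ⥤ C`, `A` an abelian
category and `T : C ⥤ A` a functor.  Define `h̄t_𝓘(T) ≤ h` iff `ImSumTop s T m n` holds
for all `m ≥ n > h`.  Then `h̄t_𝓘(T) > 0` implies `h̄t_𝓘(T) = ∞`; equivalently, if
`h̄t_𝓘(T) < ∞` (i.e. `h̄t_𝓘(T) ≤ h` for some `h ∈ ℕ`) then `h̄t_𝓘(T) ≤ 0`. -/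
theorem htbar_le_zero_of_finite (s : Icat ⥤ C) (T : C ⥤ A)
    (hfin : ∃ h : ℕ, ∀ m n : ℕ, n ≤ m → h < n → ImSumTop s T m n) :
    ∀ m n : ℕ, n ≤ m → 0 < n → ImSumTop s T m n := by
  obtain ⟨h, hfin⟩ := hfin
  intro m n hnm hn
  have K := image_empty_top s T h hfin m
  have hmem : (∅ : Finset ℕ) ∈ (Finset.range n).powerset.erase (Finset.range n) := by
    rw [Finset.mem_erase]
    exact ⟨((Finset.nonempty_range_iff.mpr hn.ne').ne_empty).symm,
      Finset.empty_mem_powerset _⟩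
  unfold ImSumTop
  rw [eq_top_iff, ← K]
  have himg : (∅ : Finset ℕ) = (∅ : Finset ℕ).image (· + (m - n)) :=
    (Finset.image_empty _).symm
  rw [himg]
  exact Finset.le_sup (f := fun S : Finset ℕ => imageSubobject (T.map (s.map (pId m (S.image (· + (m - n))))))) hmem
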